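/- Let n alternatives be processed in a fixed order, with earliest start times s : Fin n → ℝ, latest start times l : Fin n → ℝ, and durations d : Fin n → ℝ with d i ≥ 0 for all i. Define the greedy start times t by t 0 = s 0 and t (i+1) = max (s (i+1)) (t i + d i). Then there exists a schedule u : Fin n → ℝ with s i ≤ u i ≤ l i for all i and u i + d i ≤ u (i+1) for all i (a valid non-overlapping schedule respecting all start-time windows) if and only if t i ≤ l i for every i. (Hence Algorithm 3 detects a scheduling conflict for a given resource ordering exactly when the ordering admits no valid schedule.) -/

import Mathlib

/-- A valid non-overlapping schedule respecting all start-time windows exists for a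
given order iff every greedy start time meets its latest start time constraint. -/
theorem greedy_schedule_feasibility (n : ℕ) (s l d : Fin n → ℝ) (hd : ∀ i, 0 ≤ d i)
    (t : Fin n → ℝ)
    (ht0 : ∀ (h : 0 < n), t ⟨0, h⟩ = s ⟨0, h⟩)
    (htsucc : ∀ (i : ℕ) (h : i + 1 < n),
      t ⟨i + 1, h⟩ = max (s ⟨i + 1, h⟩)
        (t ⟨i, Nat.lt_of_succ_lt h⟩ + d ⟨i, Nat.lt_of_succ_lt h⟩)) :
    (∃ u : Fin n → ℝ, (∀ i, s i ≤ u i ∧ u i ≤ l i) ∧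
      ∀ (i : ℕ) (h : i + 1 < n),
        u ⟨i, Nat.lt_of_succ_lt h⟩ + d ⟨i, Nat.lt_of_succ_lt h⟩ ≤ u ⟨i + 1, h⟩) ↔
    (∀ i, t i ≤ l i) := by
  constructor
  · rintro ⟨u, hu, hord⟩ i
    have key : ∀ (k : ℕ) (hk : k < n), t ⟨k, hk⟩ ≤ u ⟨k, hk⟩ := by
      intro k
      induction k with
      | zero => intro hk; rw [ht0 hk]; exact (hu _).1
      | succ m ih =>
        intro hk
        rw [htsucc m hk]
        refine max_le (hu _).1 ?_
        exact le_trans (add_le_add_left (ih (Nat.lt_of_succ_lt hk)) _) (hord m hk)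
    exact le_trans (key i.1 i.2) (hu i).2
  · intro hl
    have hs : ∀ i, s i ≤ t i := by
      rintro ⟨k, hk⟩
      cases k with
      | zero => rw [ht0 hk]
      | succ m => rw [htsucc m hk]; exact le_max_left _ _
    refine ⟨t, fun i => ⟨hs i, hl i⟩, fun i h => ?_⟩
    rw [htsucc i h]
    exact le_max_right _ _
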